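/- Let q = (q_i) and r = (r_i) be two probability distributions over the positive integers with finite support, such that q is nonincreasing. If q is dominated by r and the entropy of q equals the entropy of r, then q = r. -/

import Mathlib

lemma gibbs_term_nonneg (a b : ℝ) (ha : 0 < a) (hb : 0 ≤ b) :
    0 ≤ b * Real.logb 2 b - b * Real.logb 2 a - (b - a) / Real.log 2 := by
  have hlog2 : (0:ℝ) < Real.log 2 := Real.log_pos (by norm_num)
  have key : b - a ≤ b * Real.log b - b * Real.log a := by
    rcases eq_or_lt_of_le hb with hb0 | hb0
    · simp [← hb0]; linarith
    · have hx : 0 < a / b := div_pos ha hb0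
      have hlog := Real.log_le_sub_one_of_pos hx
      have h1 := mul_le_mul_of_nonneg_left hlog (le_of_lt hb0)
      rw [Real.log_div (ne_of_gt ha) (ne_of_gt hb0)] at h1
      have h2 : b * (a / b - 1) = a - b := by field_simp
      nlinarith
  simp only [Real.logb]
  rw [sub_nonneg, div_le_iff₀ hlog2]
  have h3 : (b * (Real.log b / Real.log 2) - b * (Real.log a / Real.log 2)) * Real.log 2
      = b * Real.log b - b * Real.log a := by field_simp
  linarith [h3]

lemma gibbs_term_eq (a b : ℝ) (ha : 0 < a) (hb : 0 ≤ b)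
    (h : b * Real.logb 2 b - b * Real.logb 2 a - (b - a) / Real.log 2 = 0) : b = a := by
  have hlog2 : (0:ℝ) < Real.log 2 := Real.log_pos (by norm_num)
  simp only [Real.logb] at h
  have h3 : b * Real.log b - b * Real.log a - (b - a) = 0 := by
    have := congrArg (· * Real.log 2) h
    simp only [zero_mul] at this
    field_simp at this
    linarith
  by_contra hne
  rcases eq_or_lt_of_le hb with hb0 | hb0
  · rw [← hb0] at h3; simp at h3; linarith
  · have hx : 0 < a / b := div_pos ha hb0
    have hx1 : a / b ≠ 1 := by
      intro h1
      exact hne ((div_eq_one_iff_eq (ne_of_gt hb0)).mp h1).symm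
    have hlog := Real.log_lt_sub_one_of_pos hx hx1
    have hstrict := mul_lt_mul_of_pos_left hlog hb0
    rw [Real.log_div (ne_of_gt ha) (ne_of_gt hb0)] at hstrict
    have h2 : b * (a / b - 1) = a - b := by field_simp
    nlinarith

open scoped BigOperators

/-- Domination lemma (equality part): if moreover the entropies coincide, then `q = r`. -/
theorem stmt_1 (q r : ℕ → ℝ)
    (hq0 : ∀ i, 0 ≤ q i) (hr0 : ∀ i, 0 ≤ r i)
    (hqfin : (Function.support q).Finite) (hrfin : (Function.support r).Finite)
    (hqsum : ∑ᶠ i, q i = 1) (hrsum : ∑ᶠ i, r i = 1)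
    (hmono : ∀ i, q (i + 1) ≤ q i)
    (hdom : ∀ ℓ : ℕ, ∑ i ∈ Finset.range ℓ, q i ≤ ∑ i ∈ Finset.range ℓ, r i)
    (hent : -∑ᶠ i, q i * Real.logb 2 (q i) = -∑ᶠ i, r i * Real.logb 2 (r i)) :
    q = r := by
  classical
  have hanti : Antitone q := antitone_nat_of_succ_le hmono
  have hex : ∃ n, q n = 0 := by
    by_contra h
    push_neg at h
    have : Function.support q = Set.univ := by
      ext i; simpa [Function.mem_support] using h i
    rw [this] at hqfin
    exact Set.infinite_univ hqfin
  set N := Nat.find hex with hNdef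
  have hqN : q N = 0 := Nat.find_spec hex
  have hqpos : ∀ i < N, 0 < q i := fun i hi =>
    lt_of_le_of_ne (hq0 i) (Ne.symm (Nat.find_min hex hi))
  have hqzero : ∀ i, N ≤ i → q i = 0 := fun i hi =>
    le_antisymm (hqN ▸ hanti hi) (hq0 i)
  have hqsupp : Function.support q ⊆ ↑(Finset.range N) := by
    intro i hi
    simp only [Finset.coe_range, Set.mem_Iio]
    by_contra h
    exact hi (hqzero i (le_of_not_gt h))
  have hQ : ∑ i ∈ Finset.range N, q i = 1 := by
    rw [← finsum_eq_sum_of_support_subset q hqsupp]; exact hqsum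
  have hrzero : ∀ i, N ≤ i → r i = 0 := by
    intro i hi
    set T : Finset ℕ := hrfin.toFinset ∪ Finset.range N with hT
    have hsubT : Function.support r ⊆ ↑T := by
      intro j hj
      simp [hT, Set.Finite.mem_toFinset, hj]
    have hTsum : ∑ j ∈ T, r j = 1 := by
      rw [← finsum_eq_sum_of_support_subset r hsubT]; exact hrsum
    have hsplit : ∑ j ∈ T, r j = ∑ j ∈ Finset.range N, r j + ∑ j ∈ T \ Finset.range N, r j := by
      rw [add_comm, Finset.sum_sdiff (by simp [hT])]
    have h1 : (1:ℝ) ≤ ∑ j ∈ Finset.range N, r j := hQ ▸ hdom N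
    have h2 : 0 ≤ ∑ j ∈ T \ Finset.range N, r j :=
      Finset.sum_nonneg fun j _ => hr0 j
    have hzero : ∑ j ∈ T \ Finset.range N, r j = 0 := by
      rw [hsplit] at hTsum; linarith
    by_cases hiT : i ∈ T
    · exact (Finset.sum_eq_zero_iff_of_nonneg fun j _ => hr0 j).mp hzero i
        (Finset.mem_sdiff.mpr ⟨hiT, by simp [Nat.not_lt.mpr hi]⟩)
    · by_contra h
      exact hiT (Finset.mem_union_left _ (hrfin.mem_toFinset.mpr h))
  have hR : ∑ i ∈ Finset.range N, r i = 1 := by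
    have hsubr : Function.support r ⊆ ↑(Finset.range N) := by
      intro i hi
      simp only [Finset.coe_range, Set.mem_Iio]
      by_contra h
      exact hi (hrzero i (le_of_not_gt h))
    rw [← finsum_eq_sum_of_support_subset r hsubr]; exact hrsum
  have hentq : ∑ᶠ i, q i * Real.logb 2 (q i) = ∑ i ∈ Finset.range N, q i * Real.logb 2 (q i) := by
    apply finsum_eq_sum_of_support_subset
    intro i hi
    simp only [Finset.coe_range, Set.mem_Iio]
    by_contra h
    exact hi (by simp [hqzero i (le_of_not_gt h)])
  have hentr : ∑ᶠ i, r i * Real.logb 2 (r i) = ∑ i ∈ Finset.range N, r i * Real.logb 2 (r i) := by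
    apply finsum_eq_sum_of_support_subset
    intro i hi
    simp only [Finset.coe_range, Set.mem_Iio]
    by_contra h
    exact hi (by simp [hrzero i (le_of_not_gt h)])
  rw [hentq, hentr, neg_inj] at hent
  -- Abel summation: the cross entropy is at most the entropy of q
  have habel : ∑ i ∈ Finset.range N, (r i - q i) * (-Real.logb 2 (q i)) ≤ 0 := by
    have key := Finset.sum_range_by_parts (fun i => -Real.logb 2 (q i)) (fun i => r i - q i) N
    simp only [smul_eq_mul] at key
    have hGN : ∑ i ∈ Finset.range N, (r i - q i) = 0 := by
      rw [Finset.sum_sub_distrib, hR, hQ, sub_self]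
    have hconv : ∀ i ∈ Finset.range N, (r i - q i) * (-Real.logb 2 (q i))
        = -Real.logb 2 (q i) * (r i - q i) := fun i _ => mul_comm _ _
    rw [Finset.sum_congr rfl hconv, key, hGN, mul_zero, zero_sub, neg_nonpos]
    apply Finset.sum_nonneg
    intro i hi
    simp only [Finset.mem_range] at hi
    apply mul_nonneg
    · have hip : 0 < q (i+1) := hqpos (i+1) (by omega)
      have h1 : Real.logb 2 (q (i+1)) ≤ Real.logb 2 (q i) :=
        Real.logb_le_logb_of_le (by norm_num) hip (hmono i)
      linarith
    · have := hdom (i + 1)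
      rw [Finset.sum_sub_distrib, sub_nonneg]
      exact this
  -- Gibbs terms
  set G : ℕ → ℝ := fun i =>
    r i * Real.logb 2 (r i) - r i * Real.logb 2 (q i) - (r i - q i) / Real.log 2 with hGdef
  have hGnonneg : ∀ i ∈ Finset.range N, 0 ≤ G i := by
    intro i hi
    simp only [Finset.mem_range] at hi
    exact gibbs_term_nonneg (q i) (r i) (hqpos i hi) (hr0 i)
  have hGsum : ∑ i ∈ Finset.range N, G i ≤ 0 := by
    have hsub : ∑ i ∈ Finset.range N, (r i - q i) / Real.log 2 = 0 := by
      rw [← Finset.sum_div, Finset.sum_sub_distrib, hR, hQ, sub_self, zero_div]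
    have hexpand : ∑ i ∈ Finset.range N, G i
        = ∑ i ∈ Finset.range N, r i * Real.logb 2 (r i)
          - ∑ i ∈ Finset.range N, r i * Real.logb 2 (q i)
          - ∑ i ∈ Finset.range N, (r i - q i) / Real.log 2 := by
      simp only [hGdef, Finset.sum_sub_distrib]
    have hcross : ∑ i ∈ Finset.range N, r i * Real.logb 2 (q i)
        ≥ ∑ i ∈ Finset.range N, q i * Real.logb 2 (q i) := by
      have hsplit : ∑ i ∈ Finset.range N, (r i - q i) * (-Real.logb 2 (q i))
          = ∑ i ∈ Finset.range N, q i * Real.logb 2 (q i)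
            - ∑ i ∈ Finset.range N, r i * Real.logb 2 (q i) := by
        rw [← Finset.sum_sub_distrib]
        exact Finset.sum_congr rfl fun i _ => by ring
      linarith [hsplit ▸ habel]
    rw [hexpand, hsub]
    linarith [hent]
  have hGzero : ∀ i ∈ Finset.range N, G i = 0 := by
    intro i hi
    have := (Finset.sum_eq_zero_iff_of_nonneg hGnonneg).mp
      (le_antisymm hGsum (Finset.sum_nonneg hGnonneg))
    exact this i hi
  funext i
  by_cases hi : i < N
  · exact (gibbs_term_eq (q i) (r i) (hqpos i hi) (hr0 i)
      (hGzero i (Finset.mem_range.mpr hi))).symm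
  · rw [hqzero i (le_of_not_gt hi), hrzero i (le_of_not_gt hi)]
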